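/- For any matroid M, there exists a coline L of M whose copoint partition has at least two singular classes if and only if there exist two hyperplanes H_1 and H_2 of M with |H_1 △ H_2| = 2. -/

import Mathlib

open Set Matroid

namespace Paper

variable {α : Type*}

/-- A circuit of a matroid: a minimal dependent set. -/
def IsCircuit (M : Matroid α) (C : Set α) : Prop :=
  M.Dep C ∧ ∀ x ∈ C, M.Indep (C \ {x})

/-- The rank of a set: the largest cardinality of an independent subset. -/
noncomputable def rk (M : Matroid α) (X : Set α) : ℕ :=
  sSup {n : ℕ | ∃ I, I ⊆ X ∧ M.Indep I ∧ I.ncard = n}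

/-- A double circuit: a (finite) set `D` with `r(D) = |D| - 2` such that deleting any
single element does not decrease the rank. -/
def DoubleCircuit (M : Matroid α) (D : Set α) : Prop :=
  D ⊆ M.E ∧ D.Finite ∧ rk M D + 2 = D.ncard ∧ ∀ d ∈ D, rk M (D \ {d}) = rk M D

/-- `P` is the circuit partition of `D`: a partition of `D` into nonempty classes such
that the circuits of `M` contained in `D` are exactly the complements (in `D`) of the
classes. -/
def IsCircuitPartition (M : Matroid α) (D : Set α) (P : Set (Set α)) : Prop :=
  (∀ p ∈ P, p.Nonempty) ∧ (∀ p ∈ P, p ⊆ D) ∧ (∀ d ∈ D, ∃! p, p ∈ P ∧ d ∈ p) ∧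
    ∀ C, (IsCircuit M C ∧ C ⊆ D) ↔ ∃ p ∈ P, C = D \ p

/-- A positive double circuit: one whose circuit partition has strictly more singular
(size-one) classes than multiple classes. -/
def PositiveDoubleCircuit (M : Matroid α) (D : Set α) : Prop :=
  DoubleCircuit M D ∧ ∃ P, IsCircuitPartition M D P ∧
    {p ∈ P | p.ncard ≠ 1}.ncard < {p ∈ P | p.ncard = 1}.ncard

/-- A hyperplane (copoint): a maximal proper flat. -/
def IsHyperplane (M : Matroid α) (H : Set α) : Prop :=
  M.IsFlat H ∧ H ≠ M.E ∧ ∀ F, M.IsFlat F → H ⊂ F → F = M.E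

/-- A coline: a flat of codimension two. -/
def IsColine (M : Matroid α) (L : Set α) : Prop :=
  M.IsFlat L ∧ rk M L + 2 = rk M M.E

/-- `P` is the copoint partition of the coline `L`: a partition of `M.E \ L` such that
the hyperplanes containing `L` are exactly the sets `L ∪ p` for classes `p`. -/
def IsCopointPartition (M : Matroid α) (L : Set α) (P : Set (Set α)) : Prop :=
  (∀ p ∈ P, p.Nonempty) ∧ (∀ p ∈ P, p ⊆ M.E \ L) ∧ (∀ d ∈ M.E \ L, ∃! p, p ∈ P ∧ d ∈ p) ∧
    ∀ H, (IsHyperplane M H ∧ L ⊆ H) ↔ ∃ p ∈ P, H = L ∪ p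

/-- A positive coline: one whose copoint partition has strictly more singular (size-one)
classes than multiple classes. -/
def PositiveColine (M : Matroid α) (L : Set α) : Prop :=
  IsColine M L ∧ ∃ P, IsCopointPartition M L P ∧
    {p ∈ P | p.ncard ≠ 1}.ncard < {p ∈ P | p.ncard = 1}.ncard

/-- A simple matroid: no loops and no parallel pairs. -/
def SimpleM (M : Matroid α) : Prop :=
  (∀ e ∈ M.E, M.Indep {e}) ∧ ∀ e f, e ∈ M.E → f ∈ M.E → e ≠ f → M.Indep {e, f}

/-- A coloop: an element contained in every base. -/
def IsColoop (M : Matroid α) (e : α) : Prop :=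
  e ∈ M.E ∧ ∀ B, M.IsBase B → e ∈ B

open Classical in
/-- The permutation of `α` exchanging `e` and `f`. -/
noncomputable def swapMap (e f : α) (x : α) : α :=
  if x = e then f else if x = f then e else x

/-- `e` and `f` are clones in `M` if exchanging them is an automorphism of `M`. -/
def Clones (M : Matroid α) (e f : α) : Prop :=
  e ∈ M.E ∧ f ∈ M.E ∧ ∀ I, M.Indep I ↔ M.Indep (swapMap e f '' I)

/-- Contraction of a set, defined by duality with deletion. -/
noncomputable def contract (M : Matroid α) (C : Set α) : Matroid α := (M✶ ↾ (M.E \ C))✶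

/-- Deletion of a set. -/
noncomputable def delete (M : Matroid α) (D : Set α) : Matroid α := M ↾ (M.E \ D)

/-- `N` is a minor of `M`. -/
def IsMinorOf (N M : Matroid α) : Prop :=
  ∃ C D, C ⊆ M.E ∧ D ⊆ M.E ∧ Disjoint C D ∧ N = Paper.delete (contract M C) D


variable {M : Matroid α} {X Y F F' H L I : Set α} {e : α}

lemma closure_flat' (M : Matroid α) (X : Set α) : M.IsFlat (M.closure X) := by
  rw [Matroid.closure_def, sInter_eq_iInter]
  have : Nonempty {F // F ∈ {F | M.IsFlat F ∧ X ∩ M.E ⊆ F}} :=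
    ⟨⟨M.E, M.ground_isFlat, inter_subset_right⟩⟩
  exact Matroid.IsFlat.iInter fun F => F.2.1

lemma flat_inter (h1 : M.IsFlat F) (h2 : M.IsFlat F') : M.IsFlat (F ∩ F') := by
  have hcl : M.closure (F ∩ F') = F ∩ F' := by
    apply subset_antisymm
    · exact subset_inter
        ((M.closure_subset_closure inter_subset_left).trans h1.closure.subset)
        ((M.closure_subset_closure inter_subset_right).trans h2.closure.subset)
    · exact M.subset_closure _ (inter_subset_left.trans h1.subset_ground)
  rw [← hcl]; exact closure_flat' M _

variable [M.Finite]

lemma rk_bddAbove (M : Matroid α) [M.Finite] (X : Set α) :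
    BddAbove {n : ℕ | ∃ I, I ⊆ X ∧ M.Indep I ∧ I.ncard = n} := by
  refine ⟨M.E.ncard, ?_⟩
  rintro n ⟨I, hIX, hI, rfl⟩
  exact Set.ncard_le_ncard hI.subset_ground M.ground_finite

lemma rk_eq_of_basis (hI : M.IsBasis I X) : rk M X = I.ncard := by
  have hne : {n : ℕ | ∃ I, I ⊆ X ∧ M.Indep I ∧ I.ncard = n}.Nonempty :=
    ⟨0, ∅, empty_subset _, M.empty_indep, by simp⟩
  apply le_antisymm
  · apply csSup_le hne
    rintro n ⟨J, hJX, hJ, rfl⟩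
    obtain ⟨I', hI', hJI'⟩ := hJ.subset_isBasis_of_subset hJX hI.subset_ground
    have h1 : J.ncard ≤ I'.ncard :=
      Set.ncard_le_ncard hJI' (M.set_finite I' hI'.indep.subset_ground)
    have h2 : I'.encard = I.encard := hI'.encard_eq_encard hI
    have h3 : I'.ncard = I.ncard := by rw [Set.ncard_def, h2, ← Set.ncard_def]
    omega
  · exact le_csSup (rk_bddAbove M X) ⟨I, hI.subset, hI.indep, rfl⟩

lemma rk_le_rk (hXY : X ⊆ Y) : rk M X ≤ rk M Y := by
  have hne : {n : ℕ | ∃ I, I ⊆ X ∧ M.Indep I ∧ I.ncard = n}.Nonempty :=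
    ⟨0, ∅, empty_subset _, M.empty_indep, by simp⟩
  refine csSup_le_csSup (rk_bddAbove M Y) hne ?_
  rintro n ⟨I, hIX, hI, rfl⟩
  exact ⟨I, hIX.trans hXY, hI, rfl⟩

lemma rk_closure_eq (hX : X ⊆ M.E) : rk M (M.closure X) = rk M X := by
  obtain ⟨I, hI⟩ := M.exists_isBasis X hX
  rw [rk_eq_of_basis hI.isBasis_closure_right, rk_eq_of_basis hI]

lemma rk_insert_of_not_mem_closure (hX : X ⊆ M.E) (he : e ∈ M.E)
    (hecl : e ∉ M.closure X) : rk M (insert e X) = rk M X + 1 := by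
  obtain ⟨I, hI⟩ := M.exists_isBasis X hX
  have heI : e ∉ I := fun h => hecl (M.subset_closure X hX (hI.subset h))
  have hi : M.Indep (insert e I) := by
    rw [hI.indep.insert_indep_iff_of_notMem heI, hI.closure_eq_closure]
    exact ⟨he, hecl⟩
  have hIb := hI.insert_isBasis_insert hi
  rw [rk_eq_of_basis hIb, rk_eq_of_basis hI,
    Set.ncard_insert_of_notMem heI (M.set_finite I hI.indep.subset_ground)]

lemma flat_eq_ground_of_rk_ge (hF : M.IsFlat F) (h : rk M M.E ≤ rk M F) : F = M.E := by
  obtain ⟨I, hI⟩ := M.exists_isBasis F hF.subset_ground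
  obtain ⟨B, hB, hIB⟩ := hI.indep.subset_isBasis_of_subset hI.indep.subset_ground rfl.subset
  have hBfin := M.set_finite B hB.indep.subset_ground
  have h1 : rk M M.E = B.ncard := rk_eq_of_basis hB
  have h2 : rk M F = I.ncard := rk_eq_of_basis hI
  have hIBcard : B.ncard ≤ I.ncard := by omega
  have hIBeq : I = B := Set.eq_of_subset_of_ncard_le hIB hIBcard hBfin
  have hBbase : M.IsBase B := isBasis_ground_iff.mp hB
  have : M.E ⊆ F := by
    rw [← hBbase.closure_eq, ← hIBeq]
    exact (M.closure_subset_closure hI.subset).trans hF.closure.subset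
  exact subset_antisymm hF.subset_ground this

lemma flat_rk_lt (hF : M.IsFlat F) (hF' : M.IsFlat F') (hss : F ⊂ F') :
    rk M F + 1 ≤ rk M F' := by
  obtain ⟨e, heF', heF⟩ := exists_of_ssubset hss
  have h1 : rk M (insert e F) = rk M F + 1 :=
    rk_insert_of_not_mem_closure hF.subset_ground (hF'.subset_ground heF')
      (by rwa [hF.closure])
  rw [← h1]
  exact rk_le_rk (insert_subset heF' hss.subset)

lemma hyperplane_rk (hH : IsHyperplane M H) : rk M H + 1 = rk M M.E := by
  obtain ⟨hflat, hne, hmax⟩ := hH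
  obtain ⟨e, he, heH⟩ := exists_of_ssubset (hflat.subset_ground.ssubset_of_ne hne)
  have hins : insert e H ⊆ M.E := insert_subset he hflat.subset_ground
  have h2 : H ⊂ M.closure (insert e H) := by
    refine ssubset_of_subset_of_ne ((subset_insert e H).trans (M.subset_closure _ hins)) ?_
    intro h
    exact heH (h ▸ M.subset_closure _ hins (mem_insert e H))
  have h3 := hmax _ (closure_flat' M _) h2
  rw [← h3, rk_closure_eq hins,
    rk_insert_of_not_mem_closure hflat.subset_ground he (by rwa [hflat.closure])]

/-- For a coline `L` and `d ∈ M.E \ L`, `M.closure (insert d L)` is the unique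
hyperplane containing `L` and `d`. -/
lemma coline_closure_insert (hL : IsColine M L) {d : α} (hd : d ∈ M.E \ L) :
    IsHyperplane M (M.closure (insert d L)) ∧ L ⊆ M.closure (insert d L) ∧
      d ∈ M.closure (insert d L) ∧
      ∀ H', IsHyperplane M H' → L ⊆ H' → d ∈ H' → H' = M.closure (insert d L) := by
  obtain ⟨hLflat, hLrk⟩ := hL
  have hins : insert d L ⊆ M.E := insert_subset hd.1 hLflat.subset_ground
  have hrk : rk M (M.closure (insert d L)) = rk M L + 1 := by
    rw [rk_closure_eq hins,
      rk_insert_of_not_mem_closure hLflat.subset_ground hd.1 (by rw [hLflat.closure]; exact hd.2)]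
  have hflat := closure_flat' M (insert d L)
  have hne : M.closure (insert d L) ≠ M.E := fun h => by rw [h] at hrk; omega
  have hmax : ∀ F, M.IsFlat F → M.closure (insert d L) ⊂ F → F = M.E := by
    intro F hF hss
    have h1 := flat_rk_lt hflat hF hss
    have h2 := rk_le_rk (M := M) hF.subset_ground
    exact flat_eq_ground_of_rk_ge hF (by omega)
  have hLsub : L ⊆ M.closure (insert d L) := (subset_insert d L).trans (M.subset_closure _ hins)
  have hdmem : d ∈ M.closure (insert d L) := M.subset_closure _ hins (mem_insert d L)
  refine ⟨⟨hflat, hne, hmax⟩, hLsub, hdmem, ?_⟩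
  intro H' hH' hLH' hdH'
  have hsub : M.closure (insert d L) ⊆ H' := by
    rw [← hH'.1.closure]
    exact M.closure_subset_closure (insert_subset hdH' hLH')
  by_contra hne'
  exact hH'.2.1 (hmax H' hH'.1 (hsub.ssubset_of_ne (Ne.symm hne')))


/-- `M` has a coline whose copoint partition has at least two singular
classes iff it has two hyperplanes whose symmetric difference has exactly two
elements. -/
theorem coline_two_singular_iff_hyperplanes_symmdiff_two
    {α : Type*} (M : Matroid α) [M.Finite] :
    (∃ L P, IsColine M L ∧ IsCopointPartition M L P ∧
        2 ≤ {p ∈ P | p.ncard = 1}.ncard) ↔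
      ∃ H₁ H₂, IsHyperplane M H₁ ∧ IsHyperplane M H₂ ∧ (symmDiff H₁ H₂).ncard = 2 := by
  constructor
  · rintro ⟨L, P, hL, ⟨hne, hsub, huniq, hiff⟩, hcard⟩
    set S := {p ∈ P | p.ncard = 1} with hS
    have hSfin : S.Finite := by
      by_contra h
      rw [Set.Infinite.ncard (fun h' => h h')] at hcard
      omega
    obtain ⟨p, hp, q, hq, hpq⟩ := (Set.one_lt_ncard hSfin).mp (by omega)
    obtain ⟨a, rfl⟩ := Set.ncard_eq_one.mp hp.2
    obtain ⟨b, rfl⟩ := Set.ncard_eq_one.mp hq.2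
    have hab : a ≠ b := fun h => hpq (by rw [h])
    have haEL : a ∈ M.E \ L := hsub _ hp.1 rfl
    have hbEL : b ∈ M.E \ L := hsub _ hq.1 rfl
    have hH₁ := (hiff (L ∪ {a})).mpr ⟨{a}, hp.1, rfl⟩
    have hH₂ := (hiff (L ∪ {b})).mpr ⟨{b}, hq.1, rfl⟩
    refine ⟨L ∪ {a}, L ∪ {b}, hH₁.1, hH₂.1, ?_⟩
    have hsd : symmDiff (L ∪ {a}) (L ∪ {b}) = {a, b} := by
      rw [Set.symmDiff_def]
      ext x
      simp only [Set.sup_eq_union, mem_union, mem_diff, mem_singleton_iff, mem_insert_iff]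
      constructor
      · rintro (⟨h1 | h1, h2⟩ | ⟨h1 | h1, h2⟩)
        · exact absurd (Or.inl h1) h2
        · exact Or.inl h1
        · exact absurd (Or.inl h1) h2
        · exact Or.inr h1
      · rintro (rfl | rfl)
        · exact Or.inl ⟨Or.inr rfl, by rintro (h | h); exacts [haEL.2 h, hab h]⟩
        · exact Or.inr ⟨Or.inr rfl, by rintro (h | h); exacts [hbEL.2 h, hab h.symm]⟩
    rw [hsd]
    exact Set.ncard_pair hab
  · rintro ⟨H₁, H₂, hH₁, hH₂, hcard⟩
    have hH₁E : H₁ ⊆ M.E := hH₁.1.subset_ground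
    have hH₂E : H₂ ⊆ M.E := hH₂.1.subset_ground
    have hfinE := M.ground_finite
    have hnosub : ∀ {H H' : Set α}, IsHyperplane M H → IsHyperplane M H' → H ⊆ H' → H = H' := by
      intro H H' hH hH' hss
      by_contra h
      exact hH'.2.1 (hH.2.2 H' hH'.1 (hss.ssubset_of_ne h))
    have hne12 : H₁ ≠ H₂ := by
      rintro rfl
      rw [symmDiff_self] at hcard
      simp at hcard
    obtain ⟨a, haH₁, haH₂⟩ := not_subset.mp (fun h => hne12 (hnosub hH₁ hH₂ h))
    obtain ⟨b, hbH₂, hbH₁⟩ := not_subset.mp (fun h => hne12.symm (hnosub hH₂ hH₁ h))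
    have hab : a ≠ b := fun h => haH₂ (h ▸ hbH₂)
    have hsdfin : (symmDiff H₁ H₂).Finite := by
      rw [Set.symmDiff_def]
      exact ((hfinE.subset hH₁E).diff).union ((hfinE.subset hH₂E).diff)
    have habsd : ({a, b} : Set α) ⊆ symmDiff H₁ H₂ := by
      rw [Set.symmDiff_def]
      rintro x (rfl | rfl)
      · exact Or.inl ⟨haH₁, haH₂⟩
      · exact Or.inr ⟨hbH₂, hbH₁⟩
    have hsd : symmDiff H₁ H₂ = {a, b} :=
      (Set.eq_of_subset_of_ncard_le habsd (by rw [hcard, Set.ncard_pair hab]) hsdfin).symm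
    set L := H₁ ∩ H₂ with hLdef
    have haL : a ∉ L := fun h => haH₂ h.2
    have hbL : b ∉ L := fun h => hbH₁ h.1
    have hH₁eq : H₁ = insert a L := by
      ext x
      constructor
      · intro hx
        by_cases hx2 : x ∈ H₂
        · exact Or.inr ⟨hx, hx2⟩
        · have : x ∈ ({a, b} : Set α) := hsd ▸ (by rw [Set.symmDiff_def]; exact Or.inl ⟨hx, hx2⟩)
          rcases this with rfl | rfl
          · exact Or.inl rfl
          · exact absurd hx hbH₁
      · rintro (rfl | hx) <;> [exact haH₁; exact hx.1]
    have hH₂eq : H₂ = insert b L := by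
      ext x
      constructor
      · intro hx
        by_cases hx1 : x ∈ H₁
        · exact Or.inr ⟨hx1, hx⟩
        · have : x ∈ ({a, b} : Set α) := hsd ▸ (by rw [Set.symmDiff_def]; exact Or.inr ⟨hx, hx1⟩)
          rcases this with rfl | rfl
          · exact absurd hx haH₂
          · exact Or.inl rfl
      · rintro (rfl | hx) <;> [exact hbH₂; exact hx.2]
    have hLflat : M.IsFlat L := flat_inter hH₁.1 hH₂.1
    have hLE : L ⊆ M.E := hLflat.subset_ground
    have haE : a ∈ M.E := hH₁E haH₁
    have hrkH₁ : rk M H₁ + 1 = rk M M.E := hyperplane_rk hH₁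
    have hrkins : rk M H₁ = rk M L + 1 := by
      rw [hH₁eq]
      exact rk_insert_of_not_mem_closure hLE haE (by rw [hLflat.closure]; exact haL)
    have hLcoline : IsColine M L := ⟨hLflat, by omega⟩
    set P : Set (Set α) := {p | ∃ H, IsHyperplane M H ∧ L ⊆ H ∧ p = H \ L} with hPdef
    have hLsubH₁ : L ⊆ H₁ := inter_subset_left
    have hLsubH₂ : L ⊆ H₂ := inter_subset_right
    -- classes of P are nonempty
    have hclne : ∀ p ∈ P, p.Nonempty := by
      rintro p ⟨H, hH, hLH, rfl⟩
      rw [Set.diff_nonempty]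
      intro hHL
      have hHLeq : H = L := subset_antisymm hHL hLH
      have h1 := hyperplane_rk hH
      rw [hHLeq] at h1
      omega
    have hclsub : ∀ p ∈ P, p ⊆ M.E \ L := by
      rintro p ⟨H, hH, hLH, rfl⟩
      exact diff_subset_diff_left hH.1.subset_ground
    have hpart : ∀ d ∈ M.E \ L, ∃! p, p ∈ P ∧ d ∈ p := by
      intro d hd
      obtain ⟨hHd, hLHd, hdHd, hun⟩ := coline_closure_insert hLcoline hd
      refine ⟨M.closure (insert d L) \ L, ⟨⟨_, hHd, hLHd, rfl⟩, hdHd, hd.2⟩, ?_⟩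
      rintro p ⟨⟨H', hH', hLH', rfl⟩, hdp⟩
      rw [hun H' hH' hLH' hdp.1]
    have hiffP : ∀ H, (IsHyperplane M H ∧ L ⊆ H) ↔ ∃ p ∈ P, H = L ∪ p := by
      intro H
      constructor
      · rintro ⟨hH, hLH⟩
        exact ⟨H \ L, ⟨H, hH, hLH, rfl⟩, (Set.union_diff_cancel hLH).symm⟩
      · rintro ⟨p, ⟨H', hH', hLH', rfl⟩, rfl⟩
        rw [Set.union_diff_cancel hLH']
        exact ⟨hH', hLH'⟩
    have hPfin : P.Finite := by
      apply ((hfinE.diff (t := L)).finite_subsets).subset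
      intro p hp
      exact hclsub p hp
    have hamem : ({a} : Set α) ∈ P := by
      exact ⟨H₁, hH₁, hLsubH₁, by rw [hH₁eq, Set.insert_diff_eq_singleton haL]⟩
    have hbmem : ({b} : Set α) ∈ P := by
      exact ⟨H₂, hH₂, hLsubH₂, by rw [hH₂eq, Set.insert_diff_eq_singleton hbL]⟩
    refine ⟨L, P, hLcoline, ⟨hclne, hclsub, hpart, hiffP⟩, ?_⟩
    have hsub2 : ({{a}, {b}} : Set (Set α)) ⊆ {p ∈ P | p.ncard = 1} := by
      rintro p (rfl | rfl)
      · exact ⟨hamem, by simp⟩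
      · exact ⟨hbmem, by simp⟩
    have h2 : ({{a}, {b}} : Set (Set α)).ncard = 2 :=
      Set.ncard_pair (by simp [Set.singleton_eq_singleton_iff, hab])
    calc 2 = ({{a}, {b}} : Set (Set α)).ncard := h2.symm
      _ ≤ {p ∈ P | p.ncard = 1}.ncard :=
        Set.ncard_le_ncard hsub2 (hPfin.subset (fun p hp => hp.1))

end Paper
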